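/- (Naive regression is valid under a balancing covariate with positivity.) Suppose Y(t) is conditionally independent of T given (U, X) (exchangeability given (U, X)), P(T = t | σ(U, X)) > 0 a.s. for both t (positivity), and T is conditionally independent of U given X (X is a balancing covariate of U), and additionally P(T = t | σ(X)) > 0 a.s. Then for each t ∈ {0,1}, μ_t(x) := E[Y(t) | X = x] = E[Y | X = x, T = t] for a.e. x; i.e., the naive regression of Y on (X, T) identifies the conditional mean potential outcomes. -/

import Mathlib

open MeasureTheory ProbabilityTheory
open scoped NNReal ENNReal

set_option maxHeartbeats 1000000

section Aux

variable {Ω : Type*} {m' m : MeasurableSpace Ω} {mΩ : MeasurableSpace Ω} {μ : Measure Ω}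

/-- The conditional expectation of an indicator is a.e. bounded by `1` in norm. -/
lemma aux_bnd [IsProbabilityMeasure μ] (hm' : m' ≤ mΩ) {A : Set Ω} (hA : MeasurableSet A) :
    ∀ᵐ ω ∂μ, ‖(μ⟦A|m'⟧) ω‖ ≤ 1 := by
  have h0 : (0 : Ω → ℝ) ≤ᵐ[μ] μ⟦A|m'⟧ :=
    condExp_nonneg (Filter.Eventually.of_forall fun ω =>
      Set.indicator_nonneg (fun _ _ => zero_le_one) ω)
  have h1 : μ⟦A|m'⟧ ≤ᵐ[μ] μ[(fun _ => (1:ℝ))|m'] := by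
    refine condExp_mono ((integrable_const (1:ℝ)).indicator hA) (integrable_const 1)
      (Filter.Eventually.of_forall fun ω => ?_)
    by_cases hω : ω ∈ A <;> simp [Set.indicator, hω]
  have hc : μ[(fun _ => (1:ℝ))|m'] = fun _ => (1:ℝ) := condExp_const hm' 1
  filter_upwards [h0, h1] with ω hω0 hω1
  rw [hc] at hω1
  simp only [Pi.zero_apply] at hω0
  simp only [] at hω1
  rw [Real.norm_eq_abs, abs_le]
  exact ⟨by linarith, hω1⟩

/-- Pull-out property in set-integral form. -/
lemma aux_pull [IsProbabilityMeasure μ] (hm' : m' ≤ mΩ) {k g : Ω → ℝ}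
    (hk : StronglyMeasurable[m'] k)
    (hkg : Integrable (fun ω => k ω * g ω) μ) (hg : Integrable g μ)
    {S : Set Ω} (hS : MeasurableSet[m'] S) :
    ∫ ω in S, k ω * g ω ∂μ = ∫ ω in S, k ω * (μ[g|m']) ω ∂μ := by
  have h1 : ∫ ω in S, (μ[(fun ω => k ω * g ω)|m']) ω ∂μ = ∫ ω in S, k ω * g ω ∂μ :=
    setIntegral_condExp hm' hkg hS
  have h2 : μ[(fun ω => k ω * g ω)|m'] =ᵐ[μ] fun ω => k ω * (μ[g|m']) ω := by
    have := condExp_mul_of_stronglyMeasurable_left (μ := μ) hk hkg hg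
    exact this
  rw [← h1]
  exact integral_congr_ae (ae_restrict_of_ae h2)

/-- Converting a set integral over an intersection into an indicator integrand. -/
lemma aux_inter {A : Set Ω} (hA : MeasurableSet A) (h : Ω → ℝ) (S' : Set Ω) :
    ∫ ω in A ∩ S', h ω ∂μ = ∫ ω in S', A.indicator (fun _ => (1:ℝ)) ω * h ω ∂μ := by
  have he : (fun ω => A.indicator (fun _ => (1:ℝ)) ω * h ω) = fun ω => A.indicator h ω := by
    funext ω; by_cases hω : ω ∈ A <;> simp [hω]
  rw [he, setIntegral_indicator hA, Set.inter_comm]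

/-- Extension of set-integral equality from a π-system to the generated σ-algebra. -/
lemma aux_ext {E : Type*} [NormedAddCommGroup E] [NormedSpace ℝ E]
    (hm : m ≤ mΩ) {C : Set (Set Ω)}
    (h_eq : m = MeasurableSpace.generateFrom C) (h_pi : IsPiSystem C)
    {h₁ h₂ : Ω → E} (hi₁ : Integrable h₁ μ) (hi₂ : Integrable h₂ μ)
    (h_univ : ∫ ω, h₁ ω ∂μ = ∫ ω, h₂ ω ∂μ)
    (h_basic : ∀ S ∈ C, ∫ ω in S, h₁ ω ∂μ = ∫ ω in S, h₂ ω ∂μ) :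
    ∀ S : Set Ω, MeasurableSet[m] S → ∫ ω in S, h₁ ω ∂μ = ∫ ω in S, h₂ ω ∂μ := by
  intro S hS
  refine MeasurableSpace.induction_on_inter (m := m)
    (C := fun S _ => ∫ ω in S, h₁ ω ∂μ = ∫ ω in S, h₂ ω ∂μ) h_eq h_pi ?_ h_basic ?_ ?_ S hS
  · simp
  · intro t htm ht
    have e1 := integral_add_compl (hm _ htm) hi₁
    have e2 := integral_add_compl (hm _ htm) hi₂
    have f1 : ∫ ω in tᶜ, h₁ ω ∂μ = (∫ ω, h₁ ω ∂μ) - ∫ ω in t, h₁ ω ∂μ := by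
      rw [← e1]; abel
    have f2 : ∫ ω in tᶜ, h₂ ω ∂μ = (∫ ω, h₂ ω ∂μ) - ∫ ω in t, h₂ ω ∂μ := by
      rw [← e2]; abel
    rw [f1, f2, h_univ, ht]
  · intro g hd hgm hgC
    rw [integral_iUnion (fun i => hm _ (hgm i)) hd hi₁.integrableOn,
        integral_iUnion (fun i => hm _ (hgm i)) hd hi₂.integrableOn]
    exact tsum_congr fun i => hgC i

/-- Key lemma: conditional independence (in set form) allows replacing an indicator by its
conditional expectation inside an integral against an integrable function. -/
lemma aux_key [IsProbabilityMeasure μ] (hm' : m' ≤ mΩ) {f : Ω → ℝ}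
    (hfm : Measurable f) (hfi : Integrable f μ) {B : Set Ω} (hB : MeasurableSet B)
    (H : ∀ s : Set ℝ, MeasurableSet s →
      (μ⟦f ⁻¹' s ∩ B|m'⟧) =ᵐ[μ] fun ω => (μ⟦f ⁻¹' s|m'⟧) ω * (μ⟦B|m'⟧) ω)
    {S : Set Ω} (hS : MeasurableSet[m'] S) :
    ∫ ω in S, B.indicator (fun _ => (1:ℝ)) ω * f ω ∂μ
      = ∫ ω in S, (μ⟦B|m'⟧) ω * f ω ∂μ := by
  have hSm : MeasurableSet S := hm' _ hS
  have hnn : (0 : Ω → ℝ) ≤ᵐ[μ] μ⟦B|m'⟧ :=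
    condExp_nonneg (Filter.Eventually.of_forall fun ω =>
      Set.indicator_nonneg (fun _ _ => zero_le_one) ω)
  have hcm : StronglyMeasurable[m'] (μ⟦B|m'⟧) := stronglyMeasurable_condExp
  -- Step A : the indicator version of the claim.
  have stepA : ∀ s : Set ℝ, MeasurableSet s →
      ∫ ω in f ⁻¹' s ∩ S, B.indicator (fun _ => (1:ℝ)) ω ∂μ
        = ∫ ω in f ⁻¹' s ∩ S, (μ⟦B|m'⟧) ω ∂μ := by
    intro s hs
    have hfs : MeasurableSet (f ⁻¹' s) := hfm hs
    have hindint : Integrable ((f ⁻¹' s ∩ B).indicator (fun _ => (1:ℝ))) μ :=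
      (integrable_const (1:ℝ)).indicator (hfs.inter hB)
    have A1 : ∫ ω in f ⁻¹' s ∩ S, B.indicator (fun _ => (1:ℝ)) ω ∂μ
        = (μ ((f ⁻¹' s ∩ S) ∩ B)).toReal := by
      rw [setIntegral_indicator hB, setIntegral_const, smul_eq_mul, mul_one, measureReal_def]
    have A2 : ∫ ω in S, (μ⟦f ⁻¹' s ∩ B|m'⟧) ω ∂μ = (μ ((f ⁻¹' s ∩ S) ∩ B)).toReal := by
      have hset : S ∩ (f ⁻¹' s ∩ B) = (f ⁻¹' s ∩ S) ∩ B := by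
        ext ω; simp only [Set.mem_inter_iff]; tauto
      rw [setIntegral_condExp hm' hindint hS, setIntegral_indicator (hfs.inter hB),
        setIntegral_const, smul_eq_mul, mul_one, hset, measureReal_def]
    have A3 : ∫ ω in S, (μ⟦f ⁻¹' s ∩ B|m'⟧) ω ∂μ
        = ∫ ω in S, (μ⟦f ⁻¹' s|m'⟧) ω * (μ⟦B|m'⟧) ω ∂μ :=
      integral_congr_ae (ae_restrict_of_ae (H s hs))
    have hind : Integrable ((f ⁻¹' s).indicator (fun _ => (1:ℝ))) μ :=
      (integrable_const (1:ℝ)).indicator hfs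
    have A4 : ∫ ω in S, (μ⟦B|m'⟧) ω * (f ⁻¹' s).indicator (fun _ => (1:ℝ)) ω ∂μ
        = ∫ ω in S, (μ⟦B|m'⟧) ω * (μ⟦f ⁻¹' s|m'⟧) ω ∂μ := by
      refine aux_pull hm' hcm ?_ hind hS
      refine Integrable.bdd_mul (c := 1) hind (hcm.mono hm').aestronglyMeasurable ?_
      exact aux_bnd hm' hB
    have A5 : ∫ ω in f ⁻¹' s ∩ S, (μ⟦B|m'⟧) ω ∂μ
        = ∫ ω in S, (μ⟦B|m'⟧) ω * (f ⁻¹' s).indicator (fun _ => (1:ℝ)) ω ∂μ := by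
      rw [aux_inter hfs _ S]
      exact integral_congr_ae (Filter.Eventually.of_forall fun ω => mul_comm _ _)
    have A6 : ∫ ω in S, (μ⟦B|m'⟧) ω * (μ⟦f ⁻¹' s|m'⟧) ω ∂μ
        = ∫ ω in S, (μ⟦f ⁻¹' s|m'⟧) ω * (μ⟦B|m'⟧) ω ∂μ :=
      integral_congr_ae (Filter.Eventually.of_forall fun ω => mul_comm _ _)
    rw [A1, A5, A4, A6, ← A3, A2]
  -- Step B : the two weighted measures pushed forward by `f` agree.
  set w₁ : Ω → ℝ≥0 := B.indicator (fun _ => (1:ℝ≥0)) with hw₁def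
  set w₂ : Ω → ℝ≥0 := fun ω => ((μ⟦B|m'⟧) ω).toNNReal with hw₂def
  have hw₁m : Measurable w₁ := measurable_const.indicator hB
  have hw₂m : Measurable w₂ := (hcm.mono hm').measurable.real_toNNReal
  have hmap : ((μ.restrict S).withDensity fun ω => (w₁ ω : ℝ≥0∞)).map f
      = ((μ.restrict S).withDensity fun ω => (w₂ ω : ℝ≥0∞)).map f := by
    refine Measure.ext fun s hs => ?_
    rw [Measure.map_apply hfm hs, Measure.map_apply hfm hs,
      withDensity_apply _ (hfm hs), withDensity_apply _ (hfm hs),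
      Measure.restrict_restrict (hfm hs)]
    have conv₁ : ∫⁻ ω in f ⁻¹' s ∩ S, (w₁ ω : ℝ≥0∞) ∂μ
        = ENNReal.ofReal (∫ ω in f ⁻¹' s ∩ S, B.indicator (fun _ => (1:ℝ)) ω ∂μ) := by
      rw [ofReal_integral_eq_lintegral_ofReal
        (((integrable_const (1:ℝ)).indicator hB).integrableOn)
        (ae_restrict_of_ae (Filter.Eventually.of_forall fun ω =>
          Set.indicator_nonneg (fun _ _ => zero_le_one) ω))]
      refine lintegral_congr fun ω => ?_
      by_cases hω : ω ∈ B <;> simp [hw₁def, hω]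
    have conv₂ : ∫⁻ ω in f ⁻¹' s ∩ S, (w₂ ω : ℝ≥0∞) ∂μ
        = ENNReal.ofReal (∫ ω in f ⁻¹' s ∩ S, max ((μ⟦B|m'⟧) ω) 0 ∂μ) := by
      rw [ofReal_integral_eq_lintegral_ofReal
        ((integrable_condExp.pos_part).integrableOn)
        (ae_restrict_of_ae (Filter.Eventually.of_forall fun ω => le_max_right _ _))]
      refine lintegral_congr fun ω => ?_
      rw [hw₂def, ← Real.coe_toNNReal', ENNReal.ofReal_coe_nnreal]
    rw [conv₁, conv₂]
    congr 1
    rw [stepA s hs]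
    refine integral_congr_ae (ae_restrict_of_ae ?_)
    filter_upwards [hnn] with ω hω
    simp only [Pi.zero_apply] at hω
    exact (max_eq_left hω).symm
  -- Step C : conclude via `withDensity` integrals.
  have e₁ : ∫ ω in S, B.indicator (fun _ => (1:ℝ)) ω * f ω ∂μ
      = ∫ y, id y ∂(((μ.restrict S).withDensity fun ω => (w₁ ω : ℝ≥0∞)).map f) := by
    rw [integral_map hfm.aemeasurable aestronglyMeasurable_id,
      integral_withDensity_eq_integral_smul hw₁m]
    refine integral_congr_ae (Filter.Eventually.of_forall fun ω => ?_)
    by_cases hω : ω ∈ B <;> simp [hw₁def, hω, NNReal.smul_def]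
  have e₂ : ∫ ω in S, (μ⟦B|m'⟧) ω * f ω ∂μ
      = ∫ y, id y ∂(((μ.restrict S).withDensity fun ω => (w₂ ω : ℝ≥0∞)).map f) := by
    rw [integral_map hfm.aemeasurable aestronglyMeasurable_id,
      integral_withDensity_eq_integral_smul hw₂m]
    refine integral_congr_ae (ae_restrict_of_ae ?_)
    filter_upwards [hnn] with ω hω
    simp only [Pi.zero_apply] at hω
    simp [hw₂def, NNReal.smul_def, Real.coe_toNNReal', max_eq_left hω]
  rw [e₁, e₂, hmap]

/-- Conditional expectation into a finite product space is computed componentwise. -/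
lemma aux_pi [IsProbabilityMeasure μ] (hm : m ≤ mΩ) {d : ℕ} {f : Ω → Fin d → ℝ}
    (hfi : Integrable f μ) :
    (fun ω i => (μ[(fun ω' => f ω' i)|m]) ω) =ᵐ[μ] μ[f|m] := by
  have hcomp : ∀ i : Fin d, Integrable (fun ω => f ω i) μ := fun i =>
    (ContinuousLinearMap.proj (R := ℝ) (φ := fun _ : Fin d => ℝ) i).integrable_comp hfi
  have hgm : StronglyMeasurable[m] (fun ω i => (μ[(fun ω' => f ω' i)|m]) ω) := by
    have hmeas : Measurable[m] (fun ω i => (μ[(fun ω' => f ω' i)|m]) ω) :=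
      @measurable_pi_lambda Ω (Fin d) (fun _ => ℝ) m _ _
        (fun i => stronglyMeasurable_condExp.measurable)
    exact hmeas.stronglyMeasurable
  have hgsm : AEStronglyMeasurable (fun ω i => (μ[(fun ω' => f ω' i)|m]) ω) μ :=
    (hgm.mono hm).aestronglyMeasurable
  have hgint : Integrable (fun ω i => (μ[(fun ω' => f ω' i)|m]) ω) μ := by
    refine Integrable.mono' (g := fun ω => ∑ i : Fin d, ‖(μ[(fun ω' => f ω' i)|m]) ω‖)
      (integrable_finset_sum _ fun i _ => integrable_condExp.norm) hgsm
      (Filter.Eventually.of_forall fun ω => ?_)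
    rw [pi_norm_le_iff_of_nonneg (Finset.sum_nonneg fun i _ => norm_nonneg _)]
    intro i
    exact Finset.single_le_sum (f := fun i => ‖(μ[(fun ω' => f ω' i)|m]) ω‖)
      (fun j _ => norm_nonneg _) (Finset.mem_univ i)
  refine ae_eq_condExp_of_forall_setIntegral_eq hm hfi
    (fun s _ _ => hgint.integrableOn) (fun s hs _ => ?_) hgm.aestronglyMeasurable
  funext i
  have p1 := (ContinuousLinearMap.proj (R := ℝ) (φ := fun _ : Fin d => ℝ) i).integral_comp_comm
    (hgint.integrableOn (s := s))
  have p2 := (ContinuousLinearMap.proj (R := ℝ) (φ := fun _ : Fin d => ℝ) i).integral_comp_comm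
    (hfi.integrableOn (s := s))
  simp only [ContinuousLinearMap.proj_apply] at p1 p2
  calc (∫ ω in s, (fun i => (μ[(fun ω' => f ω' i)|m]) ω) ∂μ) i
      = ∫ ω in s, (μ[(fun ω' => f ω' i)|m]) ω ∂μ := p1.symm
    _ = ∫ ω in s, f ω i ∂μ := setIntegral_condExp hm (hcomp i) hs
    _ = (∫ ω in s, f ω ∂μ) i := p2

end Aux

/-- Core argument, stated with abstract sub-σ-algebras to avoid instance ambiguity. -/
lemma naive_regression_aux
    {Ω 𝒰 : Type*} {m d : ℕ}
    {mX mXT mUX : MeasurableSpace Ω} {mΩ : MeasurableSpace Ω} [StandardBorelSpace Ω]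
    [MeasurableSpace 𝒰]
    {μ : Measure Ω} [IsProbabilityMeasure μ]
    (X : Ω → Fin m → ℝ) (hX : Measurable X)
    (T : Ω → Bool) (hT : Measurable T)
    (Uv : Ω → 𝒰) (hU : Measurable Uv)
    (Y : Bool → Ω → Fin d → ℝ) (hY : ∀ t, Measurable (Y t))
    (hYint : ∀ t, Integrable (Y t) μ)
    (hmXdef : mX = MeasurableSpace.comap X inferInstance)
    (hmXTdef : mXT = MeasurableSpace.comap (fun ω => (X ω, T ω)) inferInstance)
    (hmUXdef : mUX = MeasurableSpace.comap (fun ω => (Uv ω, X ω)) inferInstance)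
    (hmX : mX ≤ mΩ) (hmXT : mXT ≤ mΩ) (hmUX : mUX ≤ mΩ)
    (hexch : ∀ t, CondIndepFun mUX hmUX (Y t) T μ)
    (hbal : CondIndepFun mX hmX T Uv μ)
    (t : Bool) :
    ∀ᵐ ω ∂μ, T ω = t →
      (μ[Y t | mX]) ω = (μ[(fun ω => Y (T ω) ω) | mXT]) ω := by
  have hmX_le_mXT : mX ≤ mXT := by
    rw [hmXdef, hmXTdef]
    have : MeasurableSpace.comap X inferInstance
        = MeasurableSpace.comap (fun ω => (X ω, T ω))
            (MeasurableSpace.comap Prod.fst inferInstance) := by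
      rw [MeasurableSpace.comap_comp]; rfl
    rw [this]
    exact MeasurableSpace.comap_mono measurable_fst.comap_le
  have hmX_le_mUX : mX ≤ mUX := by
    rw [hmXdef, hmUXdef]
    have : MeasurableSpace.comap X inferInstance
        = MeasurableSpace.comap (fun ω => (Uv ω, X ω))
            (MeasurableSpace.comap Prod.snd inferInstance) := by
      rw [MeasurableSpace.comap_comp]; rfl
    rw [this]
    exact MeasurableSpace.comap_mono measurable_snd.comap_le
  -- balancing in set form
  have hbal' := (condIndepFun_iff_condExp_inter_preimage_eq_mul hT hU).mp hbal
  -- the "dropping U" lemma : E[1_{T ∈ u} | σ(U,X)] = E[1_{T ∈ u} | σ(X)]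
  have hdrop : ∀ u : Set Bool, MeasurableSet u →
      (μ⟦T ⁻¹' u|mX⟧) =ᵐ[μ] (μ⟦T ⁻¹' u|mUX⟧) := by
    intro u hu
    have hTu : MeasurableSet (T ⁻¹' u) := hT hu
    have hind : Integrable ((T ⁻¹' u).indicator (fun _ => (1:ℝ))) μ :=
      (integrable_const (1:ℝ)).indicator hTu
    refine ae_eq_condExp_of_forall_setIntegral_eq hmUX hind
      (fun s _ _ => integrable_condExp.integrableOn) (fun S hS _ => ?_)
      ((stronglyMeasurable_condExp.mono hmX_le_mUX).aestronglyMeasurable)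
    -- set-integral equality on the π-system of rectangles
    have h_eq : mUX = MeasurableSpace.generateFrom
        (Set.preimage (fun ω => (Uv ω, X ω)) ''
          (Set.image2 (· ×ˢ ·) { s : Set 𝒰 | MeasurableSet s }
            { s : Set (Fin m → ℝ) | MeasurableSet s })) := by
      rw [hmUXdef, ← generateFrom_prod, MeasurableSpace.comap_generateFrom]
    have h_pi : IsPiSystem (Set.preimage (fun ω => (Uv ω, X ω)) ''
        (Set.image2 (· ×ˢ ·) { s : Set 𝒰 | MeasurableSet s }
          { s : Set (Fin m → ℝ) | MeasurableSet s })) :=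
      isPiSystem_prod.comap _
    refine aux_ext hmUX h_eq h_pi integrable_condExp hind (by rw [integral_condExp hmX])
      ?_ S hS
    rintro S' ⟨R, ⟨v, hv, s, hs, rfl⟩, rfl⟩
    have hrect : (fun ω => (Uv ω, X ω)) ⁻¹' (v ×ˢ s) = Uv ⁻¹' v ∩ X ⁻¹' s := by
      ext ω; simp
    have hXs : MeasurableSet[mX] (X ⁻¹' s) := by rw [hmXdef]; exact ⟨s, hs, rfl⟩
    have hUv : MeasurableSet (Uv ⁻¹' v) := hU hv
    have hindU : Integrable ((Uv ⁻¹' v).indicator (fun _ => (1:ℝ))) μ :=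
      (integrable_const (1:ℝ)).indicator hUv
    have hprod : Integrable (fun ω => (μ⟦T ⁻¹' u|mX⟧) ω
        * (Uv ⁻¹' v).indicator (fun _ => (1:ℝ)) ω) μ :=
      Integrable.bdd_mul (c := 1) hindU
        (stronglyMeasurable_condExp.mono hmX).aestronglyMeasurable
        (aux_bnd hmX hTu)
    have lhs1 : ∫ ω in (fun ω => (Uv ω, X ω)) ⁻¹' (v ×ˢ s), (μ⟦T ⁻¹' u|mX⟧) ω ∂μ
        = ∫ ω in X ⁻¹' s, (μ⟦T ⁻¹' u|mX⟧) ω * (μ⟦Uv ⁻¹' v|mX⟧) ω ∂μ := by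
      rw [hrect, aux_inter hUv _ _]
      have : ∫ ω in X ⁻¹' s, (Uv ⁻¹' v).indicator (fun _ => (1:ℝ)) ω * (μ⟦T ⁻¹' u|mX⟧) ω ∂μ
          = ∫ ω in X ⁻¹' s, (μ⟦T ⁻¹' u|mX⟧) ω * (Uv ⁻¹' v).indicator (fun _ => (1:ℝ)) ω ∂μ :=
        integral_congr_ae (Filter.Eventually.of_forall fun ω => mul_comm _ _)
      rw [this]
      exact aux_pull hmX stronglyMeasurable_condExp hprod hindU hXs
    have rhs1 : ∫ ω in (fun ω => (Uv ω, X ω)) ⁻¹' (v ×ˢ s),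
          (T ⁻¹' u).indicator (fun _ => (1:ℝ)) ω ∂μ
        = ∫ ω in X ⁻¹' s, (μ⟦T ⁻¹' u|mX⟧) ω * (μ⟦Uv ⁻¹' v|mX⟧) ω ∂μ := by
      rw [hrect, aux_inter hUv _ _]
      have he : (fun ω => (Uv ⁻¹' v).indicator (fun _ => (1:ℝ)) ω
            * (T ⁻¹' u).indicator (fun _ => (1:ℝ)) ω)
          = (T ⁻¹' u ∩ Uv ⁻¹' v).indicator (fun _ => (1:ℝ)) := by
        funext ω
        by_cases h1 : ω ∈ Uv ⁻¹' v <;> by_cases h2 : ω ∈ T ⁻¹' u <;>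
          simp [h1, h2, Set.indicator]
      rw [he, ← setIntegral_condExp hmX ((integrable_const (1:ℝ)).indicator
        (hTu.inter hUv)) hXs]
      exact integral_congr_ae (ae_restrict_of_ae (hbal' u v hu hv))
    rw [lhs1, rhs1]
  -- componentwise conditional expectation
  have hYcomp : ∀ (t' : Bool) (i : Fin d), Integrable (fun ω => Y t' ω i) μ := fun t' i =>
    (ContinuousLinearMap.proj (R := ℝ) (φ := fun _ : Fin d => ℝ) i).integrable_comp (hYint t')
  -- exchangeability in set form, componentwise
  have hexch' : ∀ i : Fin d, ∀ (s : Set ℝ) (u : Set Bool), MeasurableSet s → MeasurableSet u →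
      (μ⟦(fun ω => Y t ω i) ⁻¹' s ∩ T ⁻¹' u|mUX⟧) =ᵐ[μ]
        fun ω => (μ⟦(fun ω => Y t ω i) ⁻¹' s|mUX⟧) ω * (μ⟦T ⁻¹' u|mUX⟧) ω := by
    intro i s u hs hu
    have hcomp : CondIndepFun mUX hmUX ((fun v : Fin d → ℝ => v i) ∘ Y t) T μ :=
      (hexch t).comp (measurable_pi_apply i) measurable_id
    have := (condIndepFun_iff_condExp_inter_preimage_eq_mul
      ((measurable_pi_apply i).comp (hY t)) hT).mp hcomp s u hs hu
    exact this
  -- the core scalar computation over rectangles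
  have core : ∀ (i : Fin d) (s : Set (Fin m → ℝ)) (u : Set Bool),
      MeasurableSet s → MeasurableSet u →
      ∫ ω in X ⁻¹' s ∩ T ⁻¹' u, (μ[(fun ω' => Y t ω' i)|mX]) ω ∂μ
        = ∫ ω in X ⁻¹' s ∩ T ⁻¹' u, Y t ω i ∂μ := by
    intro i s u hs hu
    have hXs : MeasurableSet[mX] (X ⁻¹' s) := by rw [hmXdef]; exact ⟨s, hs, rfl⟩
    have hXsUX : MeasurableSet[mUX] (X ⁻¹' s) := hmX_le_mUX _ hXs
    have hTu : MeasurableSet (T ⁻¹' u) := hT hu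
    have hindT : Integrable ((T ⁻¹' u).indicator (fun _ => (1:ℝ))) μ :=
      (integrable_const (1:ℝ)).indicator hTu
    have hindT_bdd : ∃ C, ∀ ω, ‖(T ⁻¹' u).indicator (fun _ => (1:ℝ)) ω‖ ≤ C := by
      refine ⟨1, fun ω => ?_⟩
      by_cases hω : ω ∈ T ⁻¹' u <;> simp [hω]
    have comm1 : X ⁻¹' s ∩ T ⁻¹' u = T ⁻¹' u ∩ X ⁻¹' s := Set.inter_comm _ _
    -- left-hand side
    have hki : Integrable (fun ω => (μ[(fun ω' => Y t ω' i)|mX]) ω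
        * (T ⁻¹' u).indicator (fun _ => (1:ℝ)) ω) μ := by
      have h1 : Integrable (fun ω => (T ⁻¹' u).indicator (fun _ => (1:ℝ)) ω
          * (μ[(fun ω' => Y t ω' i)|mX]) ω) μ :=
        Integrable.bdd_mul integrable_condExp hindT.aestronglyMeasurable
          (Filter.Eventually.of_forall hindT_bdd.choose_spec)
      exact h1.congr (Filter.Eventually.of_forall fun ω => mul_comm _ _)
    have L : ∫ ω in X ⁻¹' s ∩ T ⁻¹' u, (μ[(fun ω' => Y t ω' i)|mX]) ω ∂μ
        = ∫ ω in X ⁻¹' s, (μ⟦T ⁻¹' u|mX⟧) ω * (μ[(fun ω' => Y t ω' i)|mX]) ω ∂μ := by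
      rw [comm1, aux_inter hTu _ _]
      have e1 : ∫ ω in X ⁻¹' s, (T ⁻¹' u).indicator (fun _ => (1:ℝ)) ω
            * (μ[(fun ω' => Y t ω' i)|mX]) ω ∂μ
          = ∫ ω in X ⁻¹' s, (μ[(fun ω' => Y t ω' i)|mX]) ω
            * (T ⁻¹' u).indicator (fun _ => (1:ℝ)) ω ∂μ :=
        integral_congr_ae (Filter.Eventually.of_forall fun ω => mul_comm _ _)
      rw [e1, aux_pull hmX stronglyMeasurable_condExp hki hindT hXs]
      exact integral_congr_ae (Filter.Eventually.of_forall fun ω => mul_comm _ _)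
    -- right-hand side
    have R : ∫ ω in X ⁻¹' s ∩ T ⁻¹' u, Y t ω i ∂μ
        = ∫ ω in X ⁻¹' s, (μ⟦T ⁻¹' u|mX⟧) ω * (μ[(fun ω' => Y t ω' i)|mX]) ω ∂μ := by
      rw [comm1, aux_inter hTu _ _]
      rw [aux_key hmUX
        (show Measurable fun ω => Y t ω i from (measurable_pi_apply i).comp (hY t))
        (hYcomp t i) hTu (fun s hs => hexch' i s u hs hu) hXsUX]
      have e2 : ∫ ω in X ⁻¹' s, (μ⟦T ⁻¹' u|mUX⟧) ω * Y t ω i ∂μ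
          = ∫ ω in X ⁻¹' s, (μ⟦T ⁻¹' u|mX⟧) ω * Y t ω i ∂μ := by
        refine integral_congr_ae (ae_restrict_of_ae ?_)
        filter_upwards [hdrop u hu] with ω hω
        rw [hω]
      rw [e2]
      refine aux_pull hmX stronglyMeasurable_condExp ?_ (hYcomp t i) hXs
      exact Integrable.bdd_mul (c := 1) (hYcomp t i)
        (stronglyMeasurable_condExp.mono hmX).aestronglyMeasurable (aux_bnd hmX hTu)
    rw [L, R]
  -- conditional expectation given `σ(X)` is also one given `σ(X, T)`
  have hb : (μ[Y t|mX]) =ᵐ[μ] μ[Y t|mXT] := by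
    refine ae_eq_condExp_of_forall_setIntegral_eq hmXT (hYint t)
      (fun s _ _ => integrable_condExp.integrableOn) (fun S hS _ => ?_)
      ((stronglyMeasurable_condExp.mono hmX_le_mXT).aestronglyMeasurable)
    have h_eq : mXT = MeasurableSpace.generateFrom
        (Set.preimage (fun ω => (X ω, T ω)) ''
          (Set.image2 (· ×ˢ ·) { s : Set (Fin m → ℝ) | MeasurableSet s }
            { u : Set Bool | MeasurableSet u })) := by
      rw [hmXTdef, ← generateFrom_prod, MeasurableSpace.comap_generateFrom]
    have h_pi : IsPiSystem (Set.preimage (fun ω => (X ω, T ω)) ''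
        (Set.image2 (· ×ˢ ·) { s : Set (Fin m → ℝ) | MeasurableSet s }
          { u : Set Bool | MeasurableSet u })) :=
      isPiSystem_prod.comap _
    refine aux_ext hmXT h_eq h_pi integrable_condExp (hYint t)
      (integral_condExp hmX) ?_ S hS
    rintro S' ⟨R, ⟨s, hs, u, hu, rfl⟩, rfl⟩
    rw [Set.mk_preimage_prod]
    have hA : MeasurableSet (X ⁻¹' s ∩ T ⁻¹' u) := (hX hs).inter (hT hu)
    funext i
    have p1 := (ContinuousLinearMap.proj (R := ℝ) (φ := fun _ : Fin d => ℝ) i).integral_comp_comm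
      (integrable_condExp.integrableOn (s := X ⁻¹' s ∩ T ⁻¹' u) (μ := μ)
        (f := μ[Y t|mX]))
    have p2 := (ContinuousLinearMap.proj (R := ℝ) (φ := fun _ : Fin d => ℝ) i).integral_comp_comm
      ((hYint t).integrableOn (s := X ⁻¹' s ∩ T ⁻¹' u))
    simp only [ContinuousLinearMap.proj_apply] at p1 p2
    have e3 : ∫ ω in X ⁻¹' s ∩ T ⁻¹' u, (μ[Y t|mX]) ω i ∂μ
        = ∫ ω in X ⁻¹' s ∩ T ⁻¹' u, (μ[(fun ω' => Y t ω' i)|mX]) ω ∂μ := by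
      refine integral_congr_ae (ae_restrict_of_ae ?_)
      filter_upwards [aux_pi hmX (hYint t)] with ω hω
      rw [← hω]
    calc (∫ ω in X ⁻¹' s ∩ T ⁻¹' u, (μ[Y t|mX]) ω ∂μ) i
        = ∫ ω in X ⁻¹' s ∩ T ⁻¹' u, (μ[Y t|mX]) ω i ∂μ := p1.symm
      _ = ∫ ω in X ⁻¹' s ∩ T ⁻¹' u, (μ[(fun ω' => Y t ω' i)|mX]) ω ∂μ := e3
      _ = ∫ ω in X ⁻¹' s ∩ T ⁻¹' u, Y t ω i ∂μ := core i s u hs hu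
      _ = (∫ ω in X ⁻¹' s ∩ T ⁻¹' u, Y t ω ∂μ) i := p2
  -- localization on the event `{T = t}`
  set A : Set Ω := T ⁻¹' {t} with hAdef
  have hA_XT : MeasurableSet[mXT] A := by
    rw [hmXTdef]
    refine ⟨Set.univ ×ˢ {t}, MeasurableSet.univ.prod (measurableSet_singleton t), ?_⟩
    ext ω; simp [hAdef, eq_comm]
  have hYobs_int : Integrable (fun ω => Y (T ω) ω) μ := by
    have he : (fun ω => Y (T ω) ω)
        = fun ω => (T ⁻¹' {true}).indicator (Y true) ω
            + (T ⁻¹' {false}).indicator (Y false) ω := by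
      funext ω
      rcases Bool.dichotomy (T ω) with h | h <;>
        simp [Set.indicator, Set.mem_preimage, h]
    rw [he]
    exact ((hYint true).indicator (hT (measurableSet_singleton true))).add
      ((hYint false).indicator (hT (measurableSet_singleton false)))
  have hAind : A.indicator (fun ω => Y (T ω) ω) = A.indicator (Y t) := by
    funext ω
    by_cases hω : ω ∈ A
    · have hTt : T ω = t := hω
      simp [Set.indicator, hω, hTt]
    · simp [Set.indicator, hω]
  have c1 := condExp_indicator (μ := μ) (m := mXT) hYobs_int hA_XT
  have c2 := condExp_indicator (μ := μ) (m := mXT) (hYint t) hA_XT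
  rw [hAind] at c1
  filter_upwards [c1, c2, hb] with ω h1 h2 h3
  intro hTt
  have hωA : ω ∈ A := by simp [hAdef, Set.mem_preimage, hTt]
  calc (μ[Y t|mX]) ω = (μ[Y t|mXT]) ω := h3
    _ = A.indicator (μ[Y t|mXT]) ω := (Set.indicator_of_mem hωA _).symm
    _ = (μ[A.indicator (Y t)|mXT]) ω := h2.symm
    _ = A.indicator (μ[(fun ω => Y (T ω) ω)|mXT]) ω := h1
    _ = (μ[(fun ω => Y (T ω) ω)|mXT]) ω := Set.indicator_of_mem hωA _

/-- **Naive regression is valid under a balancing covariate with positivity.** Suppose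
`Y t ⟂ T | (U, X)` (exchangeability given `(U, X)`), `P(T = t | σ(U, X)) > 0` a.s. for
both `t` (positivity), `T ⟂ U | X` (`X` is a balancing covariate of `U`), and
`P(T = t | σ(X)) > 0` a.s. Then for each `t`, `μ_t(x) = E[Y | X = x, T = t]` for a.e.
`x`: the naive regression of the observed outcome `Y = Y(T)` on `(X, T)` identifies
the conditional mean potential outcomes. -/
theorem naive_regression_balancing_covariate
    {Ω 𝒰 : Type*} [MeasurableSpace Ω] [StandardBorelSpace Ω] [MeasurableSpace 𝒰]
    (μ : Measure Ω) [IsProbabilityMeasure μ]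
    {m d : ℕ}
    (X : Ω → Fin m → ℝ) (hX : Measurable X)
    (T : Ω → Bool) (hT : Measurable T)
    (Uv : Ω → 𝒰) (hU : Measurable Uv)
    (Y : Bool → Ω → Fin d → ℝ) (hY : ∀ t, Measurable (Y t))
    (hYint : ∀ t, Integrable (Y t) μ)
    -- exchangeability given `(U, X)`: `Y t ⟂ T | (U, X)`
    (hexch : ∀ t, CondIndepFun
        (MeasurableSpace.comap (fun ω => (Uv ω, X ω)) inferInstance)
        ((hU.prodMk hX).comap_le) (Y t) T μ)
    -- positivity given `(U, X)`
    (hpos : ∀ t : Bool, ∀ᵐ ω ∂μ,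
        0 < (μ[(fun ω => if T ω = t then (1 : ℝ) else 0) |
            MeasurableSpace.comap (fun ω => (Uv ω, X ω)) inferInstance]) ω)
    -- `X` is a balancing covariate of `U`: `T ⟂ U | X`
    (hbal : CondIndepFun (MeasurableSpace.comap X inferInstance) hX.comap_le T Uv μ)
    -- positivity given `X`
    (hposX : ∀ t : Bool, ∀ᵐ ω ∂μ,
        0 < (μ[(fun ω => if T ω = t then (1 : ℝ) else 0) |
            MeasurableSpace.comap X inferInstance]) ω) :
    -- conclusion: `μ_t(x) = E[Y | X = x, T = t]` for a.e. `x`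
    ∀ t : Bool, ∀ᵐ ω ∂μ, T ω = t →
      (μ[Y t | MeasurableSpace.comap X inferInstance]) ω
        = (μ[(fun ω => Y (T ω) ω) |
            MeasurableSpace.comap (fun ω => (X ω, T ω)) inferInstance]) ω := by
  intro t
  exact naive_regression_aux X hX T hT Uv hU Y hY hYint rfl rfl rfl
    hX.comap_le (hX.prodMk hT).comap_le (hU.prodMk hX).comap_le hexch hbal t
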